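/- (Triple quad formula) If U, V and W are collinear points (i.e. the vectors V−U and W−U are linearly dependent), then the quadrances Q_W = Q(U,V), Q_U = Q(V,W) and Q_V = Q(U,W) satisfy (Q_U + Q_V + Q_W)² = 2(Q_U² + Q_V² + Q_W²). -/

import Mathlib

/-- The quadrance between points `U` and `W` with respect to the bilinear form `B`. -/
def quadrance {F : Type*} [Field F] {M : Type*} [AddCommGroup M] [Module F M]
    (B : LinearMap.BilinForm F M) (U W : M) : F :=
  B (W - U) (W - U)

/-- The spread between the lines `U W` and `X Z` with respect to the bilinear form `B`. -/
def spread {F : Type*} [Field F] {M : Type*} [AddCommGroup M] [Module F M]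
    (B : LinearMap.BilinForm F M) (U W X Z : M) : F :=
  1 - (B (W - U) (Z - X)) ^ 2 / (quadrance B U W * quadrance B X Z)

theorem triple_quad_formula
    {F : Type*} [Field F] (hchar : (2 : F) ≠ 0)
    {M : Type*} [AddCommGroup M] [Module F M]
    (B : LinearMap.BilinForm F M) (hsym : ∀ x y : M, B x y = B y x)
    (U V W : M)
    (hcol : ∃ a b : F, (a ≠ 0 ∨ b ≠ 0) ∧ a • (V - U) + b • (W - U) = 0) :
    (quadrance B V W + quadrance B U W + quadrance B U V) ^ 2 =
      2 * (quadrance B V W ^ 2 + quadrance B U W ^ 2 + quadrance B U V ^ 2) := by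
  obtain ⟨a, b, hab, heq⟩ := hcol
  rcases hab with ha | hb
  · -- V - U = t • (W - U) with t = -(b/a)
    set t : F := -(b / a) with ht
    have hVU : V - U = t • (W - U) := by
      have h1 : a⁻¹ • (a • (V - U) + b • (W - U)) = 0 := by rw [heq, smul_zero]
      rw [smul_add, smul_smul, inv_mul_cancel₀ ha, one_smul, smul_smul] at h1
      have h2 := eq_neg_of_add_eq_zero_left h1
      rw [h2, ← neg_smul]
      congr 1
      field_simp [ht]
      rw [ht]; field_simp
    have hWV : W - V = (1 - t) • (W - U) := by
      rw [sub_smul, one_smul, ← hVU]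
      abel
    simp only [quadrance, hVU, hWV, map_smul, LinearMap.smul_apply, smul_eq_mul]
    ring
  · -- W - U = s • (V - U)
    set s : F := -(a / b) with hs
    have hWU : W - U = s • (V - U) := by
      have h1 : b⁻¹ • (a • (V - U) + b • (W - U)) = 0 := by rw [heq, smul_zero]
      rw [smul_add, smul_smul, smul_smul, inv_mul_cancel₀ hb, one_smul] at h1
      have h2 := eq_neg_of_add_eq_zero_right h1
      rw [h2, ← neg_smul]
      congr 1
      field_simp [hs]
      rw [hs]; field_simp
    have hWV : W - V = (s - 1) • (V - U) := by
      rw [sub_smul, one_smul, ← hWU]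
      abel
    simp only [quadrance, hWU, hWV, map_smul, LinearMap.smul_apply, smul_eq_mul]
    ring
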